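/- For each m, the coefficient of q^m in (1/(q;q)_∞) Σ_{n=1}^∞ (-1)^{n+1} q^{n(3n+1)/2} equals R(m), the number of partitions of m with positive rank. -/

import Mathlib

open PowerSeries Finset

noncomputable instance : TopologicalSpace (PowerSeries ℚ) :=
  inferInstanceAs (TopologicalSpace ((Unit →₀ ℕ) → ℚ))

/-- The rank of a partition: largest part minus number of parts. -/
def rank {n : ℕ} (P : n.Partition) : ℤ :=
  (P.parts.sup : ℤ) - (Multiset.card P.parts : ℤ)

/-- The crank of a partition. -/
def crank {n : ℕ} (P : n.Partition) : ℤ :=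
  if P.parts.count 1 = 0 then (P.parts.sup : ℤ)
  else ((P.parts.filter (fun x => P.parts.count 1 < x)).card : ℤ) - (P.parts.count 1 : ℤ)

/-- The number of partitions of `n`. -/
noncomputable def p (n : ℕ) : ℕ := Nat.card n.Partition

/-- `p` extended to the integers by `0` on negatives. -/
noncomputable def pz (m : ℤ) : ℕ := if 0 ≤ m then p m.toNat else 0

/-- The number of partitions of `n` with non-negative rank. -/
noncomputable def Nrank (n : ℕ) : ℕ := Nat.card {P : n.Partition // 0 ≤ rank P}

/-- The number of partitions of `n` with positive rank. -/
noncomputable def Rrank (n : ℕ) : ℕ := Nat.card {P : n.Partition // 0 < rank P}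

/-- The number of Garden of Eden partitions of `n` (rank at most `-2`). -/
noncomputable def gePart (n : ℕ) : ℕ := Nat.card {P : n.Partition // rank P ≤ -2}

/-- The number of partitions of `n` with non-negative crank. -/
noncomputable def Ccrank (n : ℕ) : ℕ := Nat.card {P : n.Partition // 0 ≤ crank P}

/-- The number of partitions of `n` with positive crank. -/
noncomputable def Dcrank (n : ℕ) : ℕ := Nat.card {P : n.Partition // 0 < crank P}

/-- The number of partitions of `n` in which `k` is the least positive integer that is not a
part and there are more parts greater than `k` than parts less than `k`. -/
noncomputable def Mk (k n : ℕ) : ℕ := Nat.card {P : n.Partition //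
  (∀ i, 1 ≤ i → i < k → (i : ℕ) ∈ P.parts) ∧ (k : ℕ) ∉ P.parts ∧
  (P.parts.filter (fun x => x < k)).card < (P.parts.filter (fun x => k < x)).card}

/-- The number of partitions of `n` with no part divisible by 3. -/
noncomputable def p3 (n : ℕ) : ℕ := Nat.card {P : n.Partition // ∀ x ∈ P.parts, ¬ (3 ∣ x)}

/-- The infinite product `(q;q)_∞` as a formal power series. -/
noncomputable def E : PowerSeries ℚ := ∏' i : ℕ, (1 - (X : PowerSeries ℚ) ^ (i + 1))

/-- The finite product `(q;q)_n` as a formal power series. -/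
noncomputable def qPoch (n : ℕ) : PowerSeries ℚ :=
  ∏ i ∈ range n, (1 - (X : PowerSeries ℚ) ^ (i + 1))


instance : T2Space (PowerSeries ℚ) := inferInstanceAs (T2Space ((Unit →₀ ℕ) → ℚ))

-- multiset helpers
lemma msup_mem {s : Multiset ℕ} (hs : s ≠ 0) : s.sup ∈ s := by
  induction s using Multiset.induction with
  | empty => exact absurd rfl hs
  | cons a t ih =>
    rw [Multiset.sup_cons]
    rcases eq_or_ne t 0 with rfl | ht
    · simp
    · rcases le_total a t.sup with h | h
      · rw [sup_eq_right.2 h]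
        exact Multiset.mem_cons_of_mem (ih ht)
      · rw [sup_eq_left.2 h]
        exact Multiset.mem_cons_self a t

lemma mem_le_sum {s : Multiset ℕ} {x : ℕ} (hx : x ∈ s) : x ≤ s.sum := by
  induction s using Multiset.induction with
  | empty => simp at hx
  | cons a t ih =>
    rw [Multiset.sum_cons]
    rcases Multiset.mem_cons.1 hx with rfl | h
    · exact Nat.le_add_right _ _
    · exact le_add_left (ih h)

lemma sum_map_pred {s : Multiset ℕ} (hs : ∀ x ∈ s, 0 < x) :
    (s.map (· - 1)).sum + Multiset.card s = s.sum := by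
  induction s using Multiset.induction with
  | empty => simp
  | cons a t ih =>
    have ha : 0 < a := hs a (Multiset.mem_cons_self a t)
    have := ih (fun x hx => hs x (Multiset.mem_cons_of_mem hx))
    simp only [Multiset.map_cons, Multiset.sum_cons, Multiset.card_cons]
    omega

lemma sum_map_succ (s : Multiset ℕ) :
    (s.map (· + 1)).sum = s.sum + Multiset.card s := by
  induction s using Multiset.induction with
  | empty => simp
  | cons a t ih => simp [ih]; omega

/-- forward Dyson map on multisets -/
def fwdParts (s : Multiset ℕ) (r : ℕ) : Multiset ℕ :=
  (Multiset.card s + r + 1) ::ₘ (s.filter (· ≠ 1)).map (· - 1)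

/-- backward Dyson map on multisets -/
def bwdParts (Q : Multiset ℕ) (r : ℕ) : Multiset ℕ :=
  ((Q.erase Q.sup).map (· + 1)) + Multiset.replicate (Q.sup - (r + Multiset.card Q)) 1

section fwd
variable {s : Multiset ℕ} {r : ℕ}

lemma fwd_pos (hpos : ∀ x ∈ s, 0 < x) : ∀ x ∈ fwdParts s r, 0 < x := by
  intro x hx
  rcases Multiset.mem_cons.1 hx with rfl | h
  · omega
  · obtain ⟨y, hy, rfl⟩ := Multiset.mem_map.1 h
    have := hpos y (Multiset.mem_of_mem_filter hy)
    have := Multiset.of_mem_filter hy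
    omega

lemma fwd_sum (hpos : ∀ x ∈ s, 0 < x) :
    (fwdParts s r).sum = s.sum + r + 1 := by
  have key : ((s.filter (· ≠ 1)).map (· - 1)).sum = (s.map (· - 1)).sum := by
    conv_rhs => rw [← Multiset.filter_add_not (· ≠ 1) s]
    rw [Multiset.map_add, Multiset.sum_add]
    have : ((s.filter (fun a => ¬a ≠ 1)).map (· - 1)).sum = 0 := by
      rw [Multiset.sum_eq_zero]
      intro x hx
      obtain ⟨y, hy, rfl⟩ := Multiset.mem_map.1 hx
      have := Multiset.of_mem_filter hy
      omega
    omega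
  have h2 := sum_map_pred hpos
  rw [fwdParts, Multiset.sum_cons, key]
  omega

lemma fwd_card :
    Multiset.card (fwdParts s r) = 1 + Multiset.card (s.filter (· ≠ 1)) := by
  simp [fwdParts]
  omega

lemma fwd_sup (h : s.sup ≤ Multiset.card s + r + 2) :
    (fwdParts s r).sup = Multiset.card s + r + 1 := by
  rw [fwdParts, Multiset.sup_cons, sup_eq_left]
  rw [Multiset.sup_le]
  intro b hb
  obtain ⟨y, hy, rfl⟩ := Multiset.mem_map.1 hb
  have : y ≤ s.sup := Multiset.le_sup (Multiset.mem_of_mem_filter hy)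
  omega
end fwd

section bwd
variable {Q : Multiset ℕ} {r : ℕ}

lemma bwd_pos : ∀ x ∈ bwdParts Q r, 0 < x := by
  intro x hx
  rcases Multiset.mem_add.1 hx with h | h
  · obtain ⟨y, hy, rfl⟩ := Multiset.mem_map.1 h
    omega
  · rw [Multiset.eq_of_mem_replicate h]
    omega

lemma bwd_sum (hQ : Q ≠ 0) (h : r + Multiset.card Q ≤ Q.sup) :
    (bwdParts Q r).sum + (r + 1) = Q.sum := by
  have hmem : Q.sup ∈ Q := msup_mem hQ
  have hsum : Q.sup + (Q.erase Q.sup).sum = Q.sum := by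
    conv_rhs => rw [← Multiset.cons_erase hmem]
    rw [Multiset.sum_cons]
  have hcard : Multiset.card (Q.erase Q.sup) + 1 = Multiset.card Q := by
    rw [Multiset.card_erase_of_mem hmem, Nat.pred_eq_sub_one]
    have : 0 < Multiset.card Q := Multiset.card_pos.2 hQ
    omega
  have hsle : Q.sup ≤ Q.sum := mem_le_sum hmem
  rw [bwdParts, Multiset.sum_add, sum_map_succ, Multiset.sum_replicate, smul_eq_mul]
  omega

lemma bwd_card (hQ : Q ≠ 0) (h : r + Multiset.card Q ≤ Q.sup) :
    Multiset.card (bwdParts Q r) + (r + 1) = Q.sup := by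
  have hmem : Q.sup ∈ Q := msup_mem hQ
  have hcard : Multiset.card (Q.erase Q.sup) + 1 = Multiset.card Q := by
    rw [Multiset.card_erase_of_mem hmem, Nat.pred_eq_sub_one]
    have : 0 < Multiset.card Q := Multiset.card_pos.2 hQ
    omega
  rw [bwdParts, Multiset.card_add, Multiset.card_map, Multiset.card_replicate]
  omega

lemma bwd_sup_le : (bwdParts Q r).sup ≤ Q.sup + 1 := by
  rw [Multiset.sup_le]
  intro b hb
  rcases Multiset.mem_add.1 hb with h | h
  · obtain ⟨y, hy, rfl⟩ := Multiset.mem_map.1 h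
    have : y ≤ Q.sup := Multiset.le_sup (Multiset.mem_of_mem_erase hy)
    omega
  · rw [Multiset.eq_of_mem_replicate h]
    omega
end bwd

lemma roundtrip1 {s : Multiset ℕ} {r : ℕ} (hpos : ∀ x ∈ s, 0 < x)
    (h : s.sup ≤ Multiset.card s + r + 2) :
    bwdParts (fwdParts s r) r = s := by
  set c := Multiset.card s + r + 1 with hc
  set A := (s.filter (· ≠ 1)).map (· - 1) with hA
  have hsup : (fwdParts s r).sup = c := fwd_sup h
  have herase : (fwdParts s r).erase ((fwdParts s r).sup) = A := by
    rw [hsup, fwdParts, Multiset.erase_cons_head]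
  have hmapA : A.map (· + 1) = s.filter (· ≠ 1) := by
    rw [hA, Multiset.map_map]
    have : ∀ x ∈ s.filter (· ≠ 1), ((· + 1) ∘ (· - 1)) x = id x := by
      intro x hx
      have := hpos x (Multiset.mem_of_mem_filter hx)
      have := Multiset.of_mem_filter hx
      simp only [Function.comp_apply, id_eq]
      omega
    rw [Multiset.map_congr rfl this, Multiset.map_id]
  have hcards : Multiset.card (s.filter (· ≠ 1)) +
      Multiset.card (s.filter (fun a => ¬a ≠ 1)) = Multiset.card s := by
    rw [← Multiset.card_add, Multiset.filter_add_not]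
  have hcardA : Multiset.card A = Multiset.card (s.filter (· ≠ 1)) := by
    rw [hA, Multiset.card_map]
  have hpad : (fwdParts s r).sup - (r + Multiset.card (fwdParts s r)) =
      Multiset.card (s.filter (fun a => ¬a ≠ 1)) := by
    rw [hsup, fwd_card, hc]
    omega
  have hrepl : Multiset.replicate (Multiset.card (s.filter (fun a => ¬a ≠ 1))) 1 =
      s.filter (fun a => ¬a ≠ 1) := by
    symm
    rw [Multiset.eq_replicate_card]
    intro b hb
    have := Multiset.of_mem_filter hb
    have := hpos b (Multiset.mem_of_mem_filter hb)
    omega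
  rw [bwdParts, herase, hmapA, hpad, hrepl, Multiset.filter_add_not]

lemma roundtrip2 {Q : Multiset ℕ} {r : ℕ} (hQ : Q ≠ 0) (hpos : ∀ x ∈ Q, 0 < x)
    (h : r + Multiset.card Q ≤ Q.sup) :
    fwdParts (bwdParts Q r) r = Q := by
  have hmem : Q.sup ∈ Q := msup_mem hQ
  have hcardM : Multiset.card (bwdParts Q r) + (r + 1) = Q.sup := bwd_card hQ h
  have hfilt : (bwdParts Q r).filter (· ≠ 1) = (Q.erase Q.sup).map (· + 1) := by
    rw [bwdParts, Multiset.filter_add]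
    have h1 : ((Q.erase Q.sup).map (· + 1)).filter (· ≠ 1) = (Q.erase Q.sup).map (· + 1) := by
      rw [Multiset.filter_eq_self]
      intro b hb
      obtain ⟨y, hy, rfl⟩ := Multiset.mem_map.1 hb
      have := hpos y (Multiset.mem_of_mem_erase hy)
      omega
    have h2 : (Multiset.replicate (Q.sup - (r + Multiset.card Q)) 1).filter (· ≠ 1) = 0 := by
      rw [Multiset.filter_eq_nil]
      intro a ha
      rw [Multiset.eq_of_mem_replicate ha]
      simp
    rw [h1, h2, add_zero]
  have hmap : ((Q.erase Q.sup).map (· + 1)).map (· - 1) = Q.erase Q.sup := by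
    rw [Multiset.map_map]
    have : ∀ x ∈ Q.erase Q.sup, ((· - 1) ∘ (· + 1)) x = id x := by
      intro x _
      simp only [Function.comp_apply, id_eq]
      omega
    rw [Multiset.map_congr rfl this, Multiset.map_id]
  have hhead : Multiset.card (bwdParts Q r) + r + 1 = Q.sup := by
    rw [← hcardM]; ring
  rw [fwdParts, hfilt, hmap, hhead, Multiset.cons_erase hmem]
noncomputable def Nge (r n : ℕ) : ℕ := Nat.card {P : n.Partition // (r : ℤ) ≤ rank P}

/-- Dyson's bijection. -/
noncomputable def dysonEquiv (r n : ℕ) :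
    {μ : n.Partition // rank μ ≤ (r : ℤ) + 2} ≃ {P : (n + r + 1).Partition // (r : ℤ) ≤ rank P} where
  toFun := fun ⟨μ, hμ⟩ => by
    refine ⟨⟨fwdParts μ.parts r, @fun x hx => fwd_pos (fun y hy => μ.parts_pos hy) x hx, ?_⟩, ?_⟩
    · rw [fwd_sum (fun y hy => μ.parts_pos hy), μ.parts_sum]
    · have hsup : μ.parts.sup ≤ Multiset.card μ.parts + r + 2 := by
        rw [rank] at hμ; omega
      show (r : ℤ) ≤ rank _
      rw [rank]
      show (r : ℤ) ≤ ((fwdParts μ.parts r).sup : ℤ) - (Multiset.card (fwdParts μ.parts r) : ℤ)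
      rw [fwd_sup hsup, fwd_card]
      have hle : Multiset.card (μ.parts.filter (· ≠ 1)) ≤ Multiset.card μ.parts :=
        Multiset.card_le_card (Multiset.filter_le _ _)
      omega
  invFun := fun ⟨Q, hQ⟩ => by
    have hne : Q.parts ≠ 0 := by
      intro h0
      have := Q.parts_sum
      rw [h0] at this
      simp at this
    have hrk : r + Multiset.card Q.parts ≤ Q.parts.sup := by
      rw [rank] at hQ; omega
    refine ⟨⟨bwdParts Q.parts r, @fun x hx => bwd_pos x hx, ?_⟩, ?_⟩
    · have h1 := bwd_sum hne hrk
      rw [Q.parts_sum] at h1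
      omega
    · have h1 := bwd_card hne hrk
      have h2 : (bwdParts Q.parts r).sup ≤ Q.parts.sup + 1 := bwd_sup_le
      show rank _ ≤ (r : ℤ) + 2
      rw [rank]
      show ((bwdParts Q.parts r).sup : ℤ) - (Multiset.card (bwdParts Q.parts r) : ℤ) ≤ (r : ℤ) + 2
      omega
  left_inv := by
    rintro ⟨μ, hμ⟩
    have hsup : μ.parts.sup ≤ Multiset.card μ.parts + r + 2 := by
      rw [rank] at hμ; omega
    apply Subtype.ext
    apply Nat.Partition.ext
    exact roundtrip1 (fun y hy => μ.parts_pos hy) hsup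
  right_inv := by
    rintro ⟨Q, hQ⟩
    have hne : Q.parts ≠ 0 := by
      intro h0
      have := Q.parts_sum
      rw [h0] at this
      simp at this
    have hrk : r + Multiset.card Q.parts ≤ Q.parts.sup := by
      rw [rank] at hQ; omega
    apply Subtype.ext
    apply Nat.Partition.ext
    exact roundtrip2 hne (fun y hy => Q.parts_pos hy) hrk

lemma card_split {α : Type*} [Fintype α] (P : α → Prop) :
    Nat.card {x // P x} + Nat.card {x // ¬ P x} = Nat.card α := by
  classical
  simp only [Nat.card_eq_fintype_card]
  rw [Fintype.card_subtype_compl]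
  have := Fintype.card_subtype_le P
  omega

/-- Dyson's identity. -/
lemma dyson (r n : ℕ) : Nge r (n + r + 1) + Nge (r + 3) n = p n := by
  have h1 : Nat.card {μ : n.Partition // rank μ ≤ (r : ℤ) + 2} = Nge r (n + r + 1) :=
    Nat.card_congr (dysonEquiv r n)
  have h2 : Nat.card {μ : n.Partition // ¬ (rank μ ≤ (r : ℤ) + 2)} = Nge (r + 3) n := by
    apply Nat.card_congr
    apply Equiv.subtypeEquivRight
    intro μ
    push_cast
    omega
  rw [← h1, ← h2, card_split, p]

lemma nge_eq_zero {r n : ℕ} (h1 : 1 ≤ r) (h2 : n ≤ r) : Nge r n = 0 := by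
  rw [Nge, Nat.card_eq_zero]
  left
  constructor
  rintro ⟨P, hP⟩
  rw [rank] at hP
  rcases eq_or_ne P.parts 0 with h0 | h0
  · rw [h0] at hP
    simp at hP
    omega
  · have hsup : P.parts.sup ∈ P.parts := msup_mem h0
    have h3 : P.parts.sup ≤ P.parts.sum := mem_le_sum hsup
    have h4 : 0 < Multiset.card P.parts := Multiset.card_pos.2 h0
    have h5 := P.parts_sum
    omega

/-- cumulative gap function: `D j n = ∑_{i=0}^{n} (3(j+i)+2)` -/
def D : ℕ → ℕ → ℕ
  | j, 0 => 3 * j + 2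
  | j, n + 1 => 3 * j + 2 + D (j + 1) n

lemma D_ge (j n : ℕ) : n + 1 ≤ D j n := by
  induction n generalizing j with
  | zero => simp [D]
  | succ n ih => have := ih (j + 1); rw [D]; omega

lemma D_ge' (j n : ℕ) : 3 * j + 2 ≤ D j n := by
  cases n with
  | zero => simp [D]
  | succ n => rw [D]; omega

lemma two_D (j n : ℕ) : 2 * D j n = (n + 1) * (6 * j + 3 * n + 4) := by
  induction n generalizing j with
  | zero => simp [D]; ring
  | succ n ih =>
    rw [D, Nat.mul_add, ih (j + 1)]
    ring

lemma D_zero_eq (n : ℕ) : D 0 n = (n + 1) * (3 * (n + 1) + 1) / 2 := by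
  have h := two_D 0 n
  have : (n + 1) * (3 * (n + 1) + 1) = 2 * D 0 n := by rw [h]; ring
  omega

lemma key (m : ℕ) : ∀ j : ℕ,
    (Nge (3 * j + 1) m : ℚ) = ∑ n ∈ Finset.range m, (-1 : ℚ) ^ n * pz ((m : ℤ) - D j n) := by
  induction m using Nat.strong_induction_on with
  | _ m ih =>
    intro j
    by_cases hm : m ≤ 3 * j + 1
    · rw [nge_eq_zero (by omega) hm]
      rw [Finset.sum_eq_zero]
      · simp
      intro n _
      have h1 := D_ge' j n
      have h2 : ((m : ℤ) - D j n) < 0 := by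
        push_cast
        omega
      rw [pz, if_neg (by omega)]
      simp
    · push_neg at hm
      set n' := m - (3 * j + 2) with hn'
      have hm' : m = n' + (3 * j + 1) + 1 := by omega
      have hdyson := dyson (3 * j + 1) n'
      rw [← hm'] at hdyson
      have hih := ih n' (by omega) (j + 1)
      have h3 : (3 * (j + 1) + 1) = 3 * j + 1 + 3 := by ring
      rw [h3] at hih
      -- LHS = p n' - Nge (3j+4) n'
      have hL : (Nge (3 * j + 1) m : ℚ) = (p n' : ℚ) - (Nge (3 * j + 1 + 3) n' : ℚ) := by
        have : (Nge (3 * j + 1) m : ℚ) + (Nge (3 * j + 1 + 3) n' : ℚ) = (p n' : ℚ) := by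
          exact_mod_cast hdyson
        linarith
      rw [hL, hih]
      -- now work on RHS
      have hm1 : m = (m - 1) + 1 := by omega
      rw [hm1, Finset.sum_range_succ', ← hm1]
      have hfirst : (-1 : ℚ) ^ 0 * pz ((m : ℤ) - D j 0) = (p n' : ℚ) := by
        rw [pow_zero, one_mul, D]
        have h4 : (m : ℤ) - ((3 * j + 2 : ℕ) : ℤ) = (n' : ℤ) := by push_cast; omega
        rw [h4, pz, if_pos (by positivity), Int.toNat_natCast]
      rw [hfirst]
      have hterm : ∀ n, (-1 : ℚ) ^ (n + 1) * pz ((m : ℤ) - D j (n + 1)) =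
          -((-1 : ℚ) ^ n * pz ((n' : ℤ) - D (j + 1) n)) := by
        intro n
        have : (m : ℤ) - D j (n + 1) = (n' : ℤ) - D (j + 1) n := by
          rw [D]; push_cast; omega
        rw [this, pow_succ]
        ring
      rw [Finset.sum_congr rfl (fun n _ => hterm n), Finset.sum_neg_distrib]
      have hstab : ∑ n ∈ Finset.range (m - 1), (-1 : ℚ) ^ n * pz ((n' : ℤ) - D (j + 1) n) =
          ∑ n ∈ Finset.range n', (-1 : ℚ) ^ n * pz ((n' : ℤ) - D (j + 1) n) := by
        symm
        apply Finset.sum_subset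
        · apply Finset.range_subset_range.2; omega
        · intro n _ hn
          rw [Finset.mem_range] at hn
          push_neg at hn
          have h1 := D_ge (j + 1) n
          rw [pz, if_neg (by push_cast; omega)]
          simp
      rw [hstab]
      ring

lemma Rrank_eq (m : ℕ) : (Rrank m : ℚ) =
    ∑ n ∈ Finset.range (m + 1),
      (-1 : ℚ) ^ n * pz ((m : ℤ) - ((n + 1) * (3 * (n + 1) + 1) / 2 : ℕ)) := by
  have h1 : Rrank m = Nge 1 m := by
    rw [Rrank, Nge]
    apply Nat.card_congr
    apply Equiv.subtypeEquivRight
    intro P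
    omega
  have h2 := key m 0
  norm_num at h2
  have h3 : ∀ n ∈ Finset.range (m + 1),
      (-1 : ℚ) ^ n * pz ((m : ℤ) - ((n + 1) * (3 * (n + 1) + 1) / 2 : ℕ)) =
      (-1 : ℚ) ^ n * pz ((m : ℤ) - (D 0 n : ℕ)) := by
    intro n _
    rw [D_zero_eq]
  rw [Finset.sum_congr rfl h3, Finset.sum_range_succ]
  have h4 : (pz ((m : ℤ) - (D 0 m : ℕ)) : ℚ) = 0 := by
    have := D_ge 0 m
    rw [pz, if_neg (by push_cast; omega)]
    simp
  rw [h4, h1, h2]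
  ring

lemma coeff_eq_apply (f : PowerSeries ℚ) (d : Unit →₀ ℕ) :
    (PowerSeries.coeff (R := ℚ) (d ())) f = f d := by
  have h : d = Finsupp.single () (d ()) := by
    ext ⟨⟩; simp
  rw [PowerSeries.coeff]
  conv_rhs => rw [h]
  exact MvPowerSeries.coeff_apply (σ := Unit) (R := ℚ) f (Finsupp.single () (d ()))

lemma tendsto_iff_coeff {ι : Type*} {F : Filter ι} (f : ι → PowerSeries ℚ) (g : PowerSeries ℚ) :
    Filter.Tendsto f F (nhds g) ↔
      ∀ m : ℕ, Filter.Tendsto (fun i => PowerSeries.coeff (R := ℚ) m (f i)) F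
        (nhds (PowerSeries.coeff (R := ℚ) m g)) := by
  rw [show Filter.Tendsto f F (nhds g) ↔ ∀ d, Filter.Tendsto (fun i => f i d) F (nhds (g d)) from
    tendsto_pi_nhds]
  constructor
  · intro h m
    have := h (Finsupp.single () m)
    simpa [← coeff_eq_apply] using this
  · intro h d
    simpa [coeff_eq_apply] using h (d ())

lemma dvd_prod_sub_one {F : Finset ℕ} {m : ℕ} (h : ∀ i ∈ F, m + 1 ≤ i + 1) :
    (X : PowerSeries ℚ) ^ (m + 1) ∣ (∏ i ∈ F, (1 - (X : PowerSeries ℚ) ^ (i + 1))) - 1 := by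
  classical
  induction F using Finset.induction with
  | empty => simp
  | @insert a G hnotmem ih =>
    rw [Finset.prod_insert hnotmem]
    have hd : (X : PowerSeries ℚ) ^ (m + 1) ∣ (∏ i ∈ G, (1 - (X : PowerSeries ℚ) ^ (i + 1))) - 1 :=
      ih fun i hi => h i (Finset.mem_insert_of_mem hi)
    have hXa : (X : PowerSeries ℚ) ^ (m + 1) ∣ (X : PowerSeries ℚ) ^ (a + 1) :=
      pow_dvd_pow _ (h a (Finset.mem_insert_self a G))
    have expand : (1 - (X : PowerSeries ℚ) ^ (a + 1)) * (∏ i ∈ G, (1 - (X : PowerSeries ℚ) ^ (i + 1))) - 1 =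
        ((∏ i ∈ G, (1 - (X : PowerSeries ℚ) ^ (i + 1))) - 1) -
          (X : PowerSeries ℚ) ^ (a + 1) * (∏ i ∈ G, (1 - (X : PowerSeries ℚ) ^ (i + 1))) := by
      ring
    rw [expand]
    exact dvd_sub hd (Dvd.dvd.mul_right hXa _)

lemma coeff_prod_stable {m : ℕ} {F : Finset ℕ} (hF : range (m + 1) ⊆ F) :
    PowerSeries.coeff (R := ℚ) m (∏ i ∈ F, (1 - (X : PowerSeries ℚ) ^ (i + 1))) =
      PowerSeries.coeff (R := ℚ) m (qPoch (m + 1)) := by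
  classical
  have hsplit : ∏ i ∈ F, (1 - (X : PowerSeries ℚ) ^ (i + 1)) =
      qPoch (m + 1) * ∏ i ∈ F \ range (m + 1), (1 - (X : PowerSeries ℚ) ^ (i + 1)) := by
    rw [qPoch, ← Finset.prod_sdiff hF, mul_comm]
  have hd : (X : PowerSeries ℚ) ^ (m + 1) ∣
      (∏ i ∈ F \ range (m + 1), (1 - (X : PowerSeries ℚ) ^ (i + 1))) - 1 := by
    apply dvd_prod_sub_one
    intro i hi
    have := (Finset.mem_sdiff.1 hi).2
    rw [Finset.mem_range] at this
    omega
  have : ∏ i ∈ F, (1 - (X : PowerSeries ℚ) ^ (i + 1)) =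
      qPoch (m + 1) + qPoch (m + 1) * ((∏ i ∈ F \ range (m + 1), (1 - (X : PowerSeries ℚ) ^ (i + 1))) - 1) := by
    rw [hsplit]; ring
  rw [this, map_add]
  have h0 : PowerSeries.coeff (R := ℚ) m (qPoch (m + 1) *
      ((∏ i ∈ F \ range (m + 1), (1 - (X : PowerSeries ℚ) ^ (i + 1))) - 1)) = 0 := by
    have : (X : PowerSeries ℚ) ^ (m + 1) ∣ qPoch (m + 1) *
        ((∏ i ∈ F \ range (m + 1), (1 - (X : PowerSeries ℚ) ^ (i + 1))) - 1) :=
      Dvd.dvd.mul_left hd _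
    exact (PowerSeries.X_pow_dvd_iff.1 this) m (by omega)
  rw [h0, add_zero]

lemma hasProd_E : HasProd (fun i : ℕ => 1 - (X : PowerSeries ℚ) ^ (i + 1))
    (PowerSeries.mk fun m => PowerSeries.coeff (R := ℚ) m (qPoch (m + 1))) := by
  rw [HasProd, tendsto_iff_coeff]
  intro m
  rw [PowerSeries.coeff_mk]
  apply Filter.Tendsto.congr' _ tendsto_const_nhds
  rw [Filter.EventuallyEq, SummationFilter.unconditional_filter, Filter.eventually_atTop]
  refine ⟨range (m + 1), fun F hF => ?_⟩
  exact (coeff_prod_stable (Finset.le_iff_subset.1 hF)).symm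

lemma coeff_E (m : ℕ) :
    PowerSeries.coeff (R := ℚ) m E = PowerSeries.coeff (R := ℚ) m (qPoch (m + 1)) := by
  rw [E, hasProd_E.tprod_eq, PowerSeries.coeff_mk]

lemma coeff_E_of_le {m n : ℕ} (h : m + 1 ≤ n) :
    PowerSeries.coeff (R := ℚ) m E = PowerSeries.coeff (R := ℚ) m (qPoch n) := by
  rw [coeff_E]
  exact (coeff_prod_stable (by simpa using Finset.range_subset_range.2 h)).symm
noncomputable def cle (n m : ℕ) : ℕ := Nat.card {P : m.Partition // ∀ x ∈ P.parts, x ≤ n}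

lemma card_split2 {α : Type*} [Fintype α] (P Q : α → Prop) :
    Nat.card {x // P x} = Nat.card {x // P x ∧ Q x} + Nat.card {x // P x ∧ ¬ Q x} := by
  classical
  rw [← card_split (α := {x // P x}) (fun y => Q y.1)]
  congr 1
  · exact Nat.card_congr (Equiv.subtypeSubtypeEquivSubtypeInter P Q)
  · exact Nat.card_congr (Equiv.subtypeSubtypeEquivSubtypeInter P (fun x => ¬ Q x))

lemma cle_eq_p {n m : ℕ} (h : m ≤ n) : cle n m = p m := by
  rw [cle, p]
  apply Nat.card_congr
  apply Equiv.subtypeUnivEquiv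
  intro P x hx
  have := mem_le_sum hx
  rw [P.parts_sum] at this
  omega

lemma cle_zero_right (n : ℕ) : cle n 0 = 1 := by
  rw [cle_eq_p (Nat.zero_le n), p]
  simp [Nat.card_eq_fintype_card]

lemma cle_zero {m : ℕ} (h : 0 < m) : cle 0 m = 0 := by
  rw [cle, Nat.card_eq_zero]
  left
  constructor
  rintro ⟨P, hP⟩
  have hne : P.parts ≠ 0 := by
    intro h0
    have := P.parts_sum
    rw [h0] at this
    simp at this
    omega
  obtain ⟨x, hx⟩ := Multiset.exists_mem_of_ne_zero hne
  have := P.parts_pos hx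
  have := hP x hx
  omega

/-- removing one part equal to `n+1` -/
noncomputable def eraseEquiv (n m : ℕ) (h : n + 1 ≤ m) :
    {P : m.Partition // (∀ x ∈ P.parts, x ≤ n + 1) ∧ (n + 1) ∈ P.parts} ≃
      {P : (m - (n + 1)).Partition // ∀ x ∈ P.parts, x ≤ n + 1} where
  toFun := fun ⟨P, hP⟩ => by
    refine ⟨⟨P.parts.erase (n + 1), @fun x hx => P.parts_pos (Multiset.mem_of_mem_erase hx), ?_⟩,
      fun x hx => hP.1 x (Multiset.mem_of_mem_erase hx)⟩
    have hsum : (n + 1) + (P.parts.erase (n + 1)).sum = m := by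
      conv_rhs => rw [← P.parts_sum, ← Multiset.cons_erase hP.2]
      rw [Multiset.sum_cons]
    omega
  invFun := fun ⟨P, hP⟩ => by
    refine ⟨⟨(n + 1) ::ₘ P.parts, ?_, ?_⟩, ?_, Multiset.mem_cons_self _ _⟩
    · intro x hx
      rcases Multiset.mem_cons.1 hx with rfl | hh
      · omega
      · exact P.parts_pos hh
    · rw [Multiset.sum_cons, P.parts_sum]
      omega
    · intro x hx
      rcases Multiset.mem_cons.1 hx with rfl | hh
      · omega
      · exact hP x hh
  left_inv := by
    rintro ⟨P, hP⟩
    apply Subtype.ext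
    apply Nat.Partition.ext
    exact Multiset.cons_erase hP.2
  right_inv := by
    rintro ⟨P, hP⟩
    apply Subtype.ext
    apply Nat.Partition.ext
    exact Multiset.erase_cons_head _ _

lemma cle_rec (n m : ℕ) :
    cle (n + 1) m = cle n m + (if n + 1 ≤ m then cle (n + 1) (m - (n + 1)) else 0) := by
  rw [cle, card_split2 (fun P : m.Partition => ∀ x ∈ P.parts, x ≤ n + 1)
    (fun P => (n + 1) ∈ P.parts)]
  rw [add_comm]
  congr 1
  · -- no part equal to n+1 : parts ≤ n
    rw [cle]
    apply Nat.card_congr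
    apply Equiv.subtypeEquivRight
    intro P
    constructor
    · rintro ⟨h1, h2⟩ x hx
      have := h1 x hx
      rcases Nat.lt_or_ge x (n + 1) with h | h
      · omega
      · exfalso; apply h2; have : x = n + 1 := by omega
        rwa [← this]
    · intro h
      refine ⟨fun x hx => by have := h x hx; omega, fun hmem => by have := h _ hmem; omega⟩
  · by_cases h : n + 1 ≤ m
    · rw [if_pos h, cle]
      exact Nat.card_congr (eraseEquiv n m h)
    · rw [if_neg h, Nat.card_eq_zero]
      left
      constructor
      rintro ⟨P, hP⟩
      have := mem_le_sum hP.2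
      rw [P.parts_sum] at this
      omega

noncomputable def Ple (n : ℕ) : PowerSeries ℚ := PowerSeries.mk fun m => (cle n m : ℚ)

lemma qPoch_mul_Ple (n : ℕ) : qPoch n * Ple n = 1 := by
  induction n with
  | zero =>
    have h1 : qPoch 0 = 1 := by rw [qPoch]; simp
    have h2 : Ple 0 = 1 := by
      ext m
      rw [Ple, PowerSeries.coeff_mk, PowerSeries.coeff_one]
      rcases Nat.eq_zero_or_pos m with rfl | hm
      · rw [if_pos rfl, cle_zero_right]; norm_num
      · rw [if_neg (by omega), cle_zero hm]; norm_num
    rw [h1, h2, one_mul]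
  | succ n ih =>
    have hstep : (1 - (X : PowerSeries ℚ) ^ (n + 1)) * Ple (n + 1) = Ple n := by
      ext m
      rw [sub_mul, one_mul, map_sub, PowerSeries.coeff_X_pow_mul', Ple,
        PowerSeries.coeff_mk, PowerSeries.coeff_mk]
      have := cle_rec n m
      rw [Ple, PowerSeries.coeff_mk]
      by_cases h : n + 1 ≤ m
      · rw [if_pos h] at this ⊢
        push_cast [this]
        ring
      · rw [if_neg h] at this ⊢
        push_cast [this]
        ring
    have : qPoch (n + 1) = qPoch n * (1 - (X : PowerSeries ℚ) ^ (n + 1)) := by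
      rw [qPoch, qPoch, Finset.prod_range_succ]
    rw [this, mul_assoc, hstep, ih]

noncomputable def Pgf : PowerSeries ℚ := PowerSeries.mk fun m => (p m : ℚ)

lemma E_mul_Pgf : E * Pgf = 1 := by
  ext m
  rw [PowerSeries.coeff_mul]
  have h1 : ∀ x ∈ antidiagonal m, PowerSeries.coeff (R := ℚ) x.1 E * PowerSeries.coeff (R := ℚ) x.2 Pgf =
      PowerSeries.coeff (R := ℚ) x.1 (qPoch (m + 1)) * PowerSeries.coeff (R := ℚ) x.2 (Ple (m + 1)) := by
    rintro ⟨a, b⟩ hab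
    rw [Finset.HasAntidiagonal.mem_antidiagonal] at hab
    have ha : a ≤ m := by omega
    have hb : b ≤ m := by omega
    have e1 : PowerSeries.coeff (R := ℚ) a E = PowerSeries.coeff (R := ℚ) a (qPoch (m + 1)) :=
      coeff_E_of_le (by omega)
    have e2 : PowerSeries.coeff (R := ℚ) b Pgf = PowerSeries.coeff (R := ℚ) b (Ple (m + 1)) := by
      rw [Pgf, Ple, PowerSeries.coeff_mk, PowerSeries.coeff_mk, cle_eq_p (by omega)]
    rw [e1, e2]
  rw [Finset.sum_congr rfl h1, ← PowerSeries.coeff_mul, qPoch_mul_Ple]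

lemma E_inv_eq : E⁻¹ = Pgf := by
  have hc : PowerSeries.constantCoeff (R := ℚ) E ≠ 0 := by
    have h0 : PowerSeries.coeff (R := ℚ) 0 E = 1 := by
      rw [coeff_E_of_le (le_refl 1), qPoch]
      simp [PowerSeries.coeff_zero_eq_constantCoeff]
    rw [← PowerSeries.coeff_zero_eq_constantCoeff, h0]
    norm_num
  symm
  rw [PowerSeries.eq_inv_iff_mul_eq_one hc, mul_comm]
  exact E_mul_Pgf


/-- exponents of the series -/
def expo (n : ℕ) : ℕ := (n + 1) * (3 * (n + 1) + 1) / 2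

lemma expo_ge (n : ℕ) : n + 1 ≤ expo n := by
  rw [expo, ← D_zero_eq]
  exact D_ge 0 n

noncomputable def Sser : PowerSeries ℚ :=
  PowerSeries.mk fun k => ∑ n ∈ Finset.range k,
    PowerSeries.coeff (R := ℚ) k (((-1 : ℚ) ^ n) • (X : PowerSeries ℚ) ^ (expo n))

lemma coeff_term_eq_zero {k n : ℕ} (h : k ≤ n) :
    PowerSeries.coeff (R := ℚ) k (((-1 : ℚ) ^ n) • (X : PowerSeries ℚ) ^ (expo n)) = 0 := by
  rw [map_smul, PowerSeries.coeff_X_pow, if_neg (by have := expo_ge n; omega)]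
  simp

lemma hasSum_S : HasSum (fun n : ℕ => ((-1 : ℚ) ^ n) • (X : PowerSeries ℚ) ^ (expo n)) Sser := by
  rw [HasSum, tendsto_iff_coeff]
  intro k
  rw [Sser, PowerSeries.coeff_mk]
  apply Filter.Tendsto.congr' _ tendsto_const_nhds
  rw [Filter.EventuallyEq, SummationFilter.unconditional_filter, Filter.eventually_atTop]
  refine ⟨Finset.range k, fun F hF => ?_⟩
  rw [map_sum]
  apply Finset.sum_subset (Finset.le_iff_subset.1 hF)
  intro n _ hn
  rw [Finset.mem_range] at hn
  exact coeff_term_eq_zero (by omega)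

theorem stmt7 (m : ℕ) :
    (PowerSeries.coeff (R := ℚ) m)
        (E⁻¹ * ∑' n : ℕ,
          ((-1 : ℚ) ^ n) • (X : PowerSeries ℚ) ^ ((n + 1) * (3 * (n + 1) + 1) / 2)) =
      (Rrank m : ℚ) := by
  have htsum : (∑' n : ℕ,
      ((-1 : ℚ) ^ n) • (X : PowerSeries ℚ) ^ ((n + 1) * (3 * (n + 1) + 1) / 2)) = Sser :=
    hasSum_S.tsum_eq
  rw [htsum, E_inv_eq, PowerSeries.coeff_mul]
  have step1 : ∀ x ∈ antidiagonal m,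
      PowerSeries.coeff (R := ℚ) x.1 Pgf * PowerSeries.coeff (R := ℚ) x.2 Sser =
      ∑ n ∈ Finset.range (m + 1), PowerSeries.coeff (R := ℚ) x.1 Pgf *
        PowerSeries.coeff (R := ℚ) x.2 (((-1 : ℚ) ^ n) • (X : PowerSeries ℚ) ^ (expo n)) := by
    rintro ⟨a, b⟩ hab
    rw [Finset.HasAntidiagonal.mem_antidiagonal] at hab
    rw [Sser, PowerSeries.coeff_mk, Finset.mul_sum]
    apply Finset.sum_subset (Finset.range_subset_range.2 (by omega))
    intro n _ hn
    rw [Finset.mem_range] at hn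
    rw [coeff_term_eq_zero (by omega)]
    ring
  rw [Finset.sum_congr rfl step1, Finset.sum_comm]
  have step2 : ∀ n ∈ Finset.range (m + 1),
      ∑ x ∈ antidiagonal m, PowerSeries.coeff (R := ℚ) x.1 Pgf *
        PowerSeries.coeff (R := ℚ) x.2 (((-1 : ℚ) ^ n) • (X : PowerSeries ℚ) ^ (expo n)) =
      (-1 : ℚ) ^ n * pz ((m : ℤ) - (expo n : ℕ)) := by
    intro n _
    rw [← PowerSeries.coeff_mul, mul_smul_comm, map_smul, PowerSeries.coeff_mul_X_pow']
    by_cases h : expo n ≤ m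
    · rw [if_pos h, Pgf, PowerSeries.coeff_mk, pz, if_pos (by push_cast; omega)]
      have : ((m : ℤ) - (expo n : ℕ)).toNat = m - expo n := by omega
      rw [this]
      simp
    · rw [if_neg h, pz, if_neg (by push_cast; omega)]
      simp
  rw [Finset.sum_congr rfl step2, Rrank_eq m]
  apply Finset.sum_congr rfl
  intro n _
  rw [expo]
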